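/- Let d be a natural number, f : ℝ^d → ℝ^d a Lipschitz map with Lipschitz constant D_f with respect to the ∞-norm, and x : ℝ → ℝ^d a continuous function with x(0) = x₀. Then for every x_tg ∈ ℝ^d and every t ≥ 0, ‖∫₀ᵗ f(x(τ)) dτ‖_∞ ≤ t·(‖f(x₀)‖_∞ + D_f·‖x_tg − x₀‖_∞) + D_f·∫₀ᵗ ‖x_tg − x(τ)‖_∞ dτ. -/

import Mathlib

theorem drift_term_estimate
    (d : ℕ)
    (f : (Fin d → ℝ) → (Fin d → ℝ))
    (D_f : ℝ)
    (hf_lip : ∀ a b : Fin d → ℝ, ‖f a - f b‖ ≤ D_f * ‖a - b‖)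
    (x : ℝ → Fin d → ℝ) (hx_cont : Continuous x)
    (x₀ : Fin d → ℝ) (hx0 : x 0 = x₀) :
    ∀ (x_tg : Fin d → ℝ) (t : ℝ), 0 ≤ t →
      ‖∫ τ in (0 : ℝ)..t, f (x τ)‖ ≤
        t * (‖f x₀‖ + D_f * ‖x_tg - x₀‖) +
          D_f * ∫ τ in (0 : ℝ)..t, ‖x_tg - x τ‖ := by
  intro x_tg t ht
  by_cases hd : Subsingleton (Fin d → ℝ)
  · have hz : ∀ v : Fin d → ℝ, v = 0 := fun v => Subsingleton.elim v 0
    have h1 : (fun τ => f (x τ)) = fun _ : ℝ => (0 : Fin d → ℝ) := funext fun τ => hz _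
    have h2 : (fun τ => ‖x_tg - x τ‖) = fun _ : ℝ => (0 : ℝ) := funext fun τ => by
      rw [hz (x_tg - x τ), norm_zero]
    rw [h1, h2, hz (f x₀), hz (x_tg - x₀)]
    simp
  · -- D_f is nonneg
    have hD : 0 ≤ D_f := by
      rw [not_subsingleton_iff_nontrivial] at hd
      obtain ⟨a, b, hab⟩ := hd
      have h1 : 0 < ‖a - b‖ := by
        rw [norm_pos_iff]; exact sub_ne_zero_of_ne hab
      have h2 := (norm_nonneg (f a - f b)).trans (hf_lip a b)
      nlinarith
    have hfc : Continuous f := by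
      apply LipschitzWith.continuous (K := Real.toNNReal D_f)
      apply LipschitzWith.of_dist_le_mul
      intro a b
      rw [dist_eq_norm, dist_eq_norm]
      calc ‖f a - f b‖ ≤ D_f * ‖a - b‖ := hf_lip a b
        _ = (Real.toNNReal D_f : ℝ) * ‖a - b‖ := by rw [Real.coe_toNNReal _ hD]
    have hint1 : IntervalIntegrable (fun τ => ‖f (x τ)‖) MeasureTheory.volume 0 t :=
      (hfc.comp hx_cont).norm.intervalIntegrable 0 t
    have hc : Continuous fun τ => ‖x_tg - x τ‖ := (continuous_const.sub hx_cont).norm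
    have hint2 : IntervalIntegrable
        (fun τ => ‖f x₀‖ + D_f * ‖x_tg - x₀‖ + D_f * ‖x_tg - x τ‖)
        MeasureTheory.volume 0 t :=
      (continuous_const.add (continuous_const.mul hc)).intervalIntegrable 0 t
    calc ‖∫ τ in (0:ℝ)..t, f (x τ)‖
        ≤ ∫ τ in (0:ℝ)..t, ‖f (x τ)‖ :=
          intervalIntegral.norm_integral_le_integral_norm ht
      _ ≤ ∫ τ in (0:ℝ)..t, (‖f x₀‖ + D_f * ‖x_tg - x₀‖ + D_f * ‖x_tg - x τ‖) := by
          apply intervalIntegral.integral_mono_on ht hint1 hint2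
          intro τ _
          have h1 : ‖f (x τ)‖ ≤ ‖f x₀‖ + ‖f (x τ) - f x₀‖ := by
            calc ‖f (x τ)‖ = ‖f x₀ + (f (x τ) - f x₀)‖ := by ring_nf
              _ ≤ ‖f x₀‖ + ‖f (x τ) - f x₀‖ := norm_add_le _ _
          have h2 : ‖f (x τ) - f x₀‖ ≤ D_f * ‖x τ - x₀‖ := hf_lip _ _
          have h3 : ‖x τ - x₀‖ ≤ ‖x_tg - x₀‖ + ‖x_tg - x τ‖ := by
            calc ‖x τ - x₀‖ = ‖(x_tg - x₀) - (x_tg - x τ)‖ := by ring_nf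
              _ ≤ ‖x_tg - x₀‖ + ‖x_tg - x τ‖ := norm_sub_le _ _
          nlinarith
      _ = t * (‖f x₀‖ + D_f * ‖x_tg - x₀‖) + D_f * ∫ τ in (0:ℝ)..t, ‖x_tg - x τ‖ := by
          rw [intervalIntegral.integral_add (g := fun τ => D_f * ‖x_tg - x τ‖) (continuous_const.intervalIntegrable 0 t)
            ((continuous_const.mul hc).intervalIntegrable 0 t),
            intervalIntegral.integral_const,
            intervalIntegral.integral_const_mul]
          rw [smul_eq_mul]; ring
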